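/- Let H be an n×(n−k) parity-check matrix over GF(2) and let τ be the set of erased coordinates. The iterative peeling decoder—which repeatedly finds a parity check (column of H) with exactly one erased participating coordinate and recovers that coordinate—can recover all erased coordinates if and only if τ contains no nonempty stopping set. -/
import Mathlib


open Finset

/-- `τ` is a stopping set of `H` if no column of `H` restricted to rows `τ` has exactly
one nonzero entry. -/
def IsStoppingSet {n m : ℕ} (H : Fin n → Fin m → ZMod 2) (τ : Finset (Fin n)) : Prop :=
  ∀ j : Fin m, (τ.filter (fun i => H i j ≠ 0)).card ≠ 1

/-- One step of the peeling decoder: some parity check (column `j`) has exactly one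
erased participating coordinate `i`, which is thereby recovered (removed from the
erased set). -/
def PeelStep {n m : ℕ} (H : Fin n → Fin m → ZMod 2) (τ τ' : Finset (Fin n)) : Prop :=
  ∃ i ∈ τ, ∃ j : Fin m, τ.filter (fun i' => H i' j ≠ 0) = {i} ∧ τ' = τ.erase i

lemma forward {n m : ℕ} (H : Fin n → Fin m → ZMod 2) :
    ∀ τ : Finset (Fin n), Relation.ReflTransGen (PeelStep H) τ ∅ →
      ∀ σ : Finset (Fin n), σ ⊆ τ → σ.Nonempty → ¬ IsStoppingSet H σ := by
  intro τ h
  induction h using Relation.ReflTransGen.head_induction_on with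
  | refl =>
    intro σ hσ hne _
    exact hne.ne_empty (Finset.subset_empty.mp hσ)
  | head hstep _ ih =>
    rename_i a b _
    obtain ⟨i, hi, j, hfil, hb⟩ := hstep
    intro σ hσ hne hstop
    by_cases hiσ : i ∈ σ
    · -- σ.filter ... j = {i}
      have hsub : σ.filter (fun i' => H i' j ≠ 0) ⊆ {i} := by
        rw [← hfil]; exact Finset.filter_subset_filter _ hσ
      have hHi : H i j ≠ 0 := by
        have : i ∈ a.filter (fun i' => H i' j ≠ 0) := hfil ▸ Finset.mem_singleton_self i
        exact (Finset.mem_filter.mp this).2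
      have hmem : i ∈ σ.filter (fun i' => H i' j ≠ 0) := Finset.mem_filter.mpr ⟨hiσ, hHi⟩
      have : σ.filter (fun i' => H i' j ≠ 0) = {i} :=
        Finset.Subset.antisymm hsub (Finset.singleton_subset_iff.mpr hmem)
      exact hstop j (by rw [this, Finset.card_singleton])
    · have : σ ⊆ b := by
        rw [hb]
        intro x hx
        exact Finset.mem_erase.mpr ⟨fun h => hiσ (h ▸ hx), hσ hx⟩
      exact ih σ this hne hstop

theorem stmt9 {n m : ℕ} (H : Fin n → Fin m → ZMod 2) (τ : Finset (Fin n)) :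
    Relation.ReflTransGen (PeelStep H) τ ∅ ↔
      ∀ σ : Finset (Fin n), σ ⊆ τ → σ.Nonempty → ¬ IsStoppingSet H σ := by
  constructor
  · exact forward H τ
  · induction τ using Finset.strongInduction with
    | _ τ ih =>
      intro h
      rcases τ.eq_empty_or_nonempty with rfl | hne
      · exact Relation.ReflTransGen.refl
      · have hns := h τ (Finset.Subset.refl _) hne
        simp only [IsStoppingSet, not_forall, not_not] at hns
        obtain ⟨j, hj⟩ := hns
        obtain ⟨i, hi⟩ := Finset.card_eq_one.mp hj
        have hiτ : i ∈ τ :=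
          Finset.filter_subset _ _ (hi ▸ Finset.mem_singleton_self i)
        have hstep : PeelStep H τ (τ.erase i) := ⟨i, hiτ, j, hi, rfl⟩
        have htail : Relation.ReflTransGen (PeelStep H) (τ.erase i) ∅ := by
          apply ih (τ.erase i) (Finset.erase_ssubset hiτ)
          intro σ hσ hσne
          exact h σ (hσ.trans (Finset.erase_subset _ _)) hσne
        exact Relation.ReflTransGen.head hstep htail
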